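/- Let T be a bimonad on a monoidal category C. Under the canonical bijection Hom(1_C, T) ≅ Hom(U_T, U_T) (sending g to g^♯ with g^♯_{(M,r)} = r∘g_M), a natural transformation g : 1_C → T is grouplike (i.e., T_2(X,Y)∘g_{X⊗Y} = g_X ⊗ g_Y and T_0∘g_1 = id_1) if and only if g^♯ is a monoidal natural endomorphism of the strict monoidal forgetful functor U_T. Moreover, if C is autonomous and T is a Hopf monad, the set G(T) of grouplike elements is a group under convolution, with inverse of g given by S(g) = S⁻¹(g). -/

import Mathlib

open CategoryTheory MonoidalCategory

namespace HopfMonadPaper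

variable {C : Type*} [Category C] [MonoidalCategory C]

/-- A comonoidal (oplax monoidal) structure on an endofunctor `T`,
with coproduct `δ X Y : T(X ⊗ Y) ⟶ T(X) ⊗ₘ T(Y)` and counit `ε : T(𝟙) ⟶ 𝟙`. -/
structure Comonoidal (T : C ⥤ C) where
  δ : ∀ X Y : C, T.obj (X ⊗ Y) ⟶ T.obj X ⊗ T.obj Y
  ε : T.obj (𝟙_ C) ⟶ 𝟙_ C
  δ_natural : ∀ {X X' Y Y' : C} (f : X ⟶ X') (g : Y ⟶ Y'),
    T.map (f ⊗ₘ g) ≫ δ X' Y' = δ X Y ≫ (T.map f ⊗ₘ T.map g)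
  coassoc : ∀ X Y Z : C,
    δ (X ⊗ Y) Z ≫ (δ X Y ⊗ₘ 𝟙 (T.obj Z)) ≫ (α_ (T.obj X) (T.obj Y) (T.obj Z)).hom
      = T.map (α_ X Y Z).hom ≫ δ X (Y ⊗ Z) ≫ (𝟙 (T.obj X) ⊗ₘ δ Y Z)
  counit_left : ∀ X : C,
    δ (𝟙_ C) X ≫ (ε ⊗ₘ 𝟙 (T.obj X)) ≫ (λ_ (T.obj X)).hom = T.map (λ_ X).hom
  counit_right : ∀ X : C,
    δ X (𝟙_ C) ≫ (𝟙 (T.obj X) ⊗ₘ ε) ≫ (ρ_ (T.obj X)).hom = T.map (ρ_ X).hom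

/-- The bimonad axioms: the product and unit of the monad are comonoidal. -/
structure IsBimonad (T : Monad C) (Q : Comonoidal T.toFunctor) : Prop where
  mu_δ : ∀ X Y : C, T.μ.app (X ⊗ Y) ≫ Q.δ X Y
    = T.map (Q.δ X Y) ≫ Q.δ (T.obj X) (T.obj Y) ≫ (T.μ.app X ⊗ₘ T.μ.app Y)
  mu_ε : T.μ.app (𝟙_ C) ≫ Q.ε = T.map Q.ε ≫ Q.ε
  eta_δ : ∀ X Y : C, T.η.app (X ⊗ Y) ≫ Q.δ X Y = T.η.app X ⊗ₘ T.η.app Y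
  eta_ε : T.η.app (𝟙_ C) ≫ Q.ε = 𝟙 (𝟙_ C)

/-- A choice of left duals: `d X = ˡX` with evaluation `ev X : ˡX ⊗ₘ X ⟶ 𝟙`
and coevaluation `coev X : 𝟙 ⟶ X ⊗ₘ ˡX`, satisfying the triangle identities. -/
structure LeftDualData (C : Type*) [Category C] [MonoidalCategory C] where
  d : C → C
  ev : ∀ X : C, d X ⊗ X ⟶ 𝟙_ C
  coev : ∀ X : C, 𝟙_ C ⟶ X ⊗ d X
  tri1 : ∀ X : C, (ρ_ (d X)).inv ≫ (𝟙 (d X) ⊗ₘ coev X) ≫ (α_ (d X) X (d X)).inv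
    ≫ (ev X ⊗ₘ 𝟙 (d X)) ≫ (λ_ (d X)).hom = 𝟙 (d X)
  tri2 : ∀ X : C, (λ_ X).inv ≫ (coev X ⊗ₘ 𝟙 X) ≫ (α_ X (d X) X).hom
    ≫ (𝟙 X ⊗ₘ ev X) ≫ (ρ_ X).hom = 𝟙 X

/-- Left transpose (left dual) of a morphism. -/
def LeftDualData.tr (L : LeftDualData C) {X Y : C} (f : X ⟶ Y) : L.d Y ⟶ L.d X :=
  (ρ_ (L.d Y)).inv ≫ (𝟙 (L.d Y) ⊗ₘ L.coev X) ≫ (𝟙 (L.d Y) ⊗ₘ (f ⊗ₘ 𝟙 (L.d X)))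
    ≫ (α_ (L.d Y) Y (L.d X)).inv ≫ (L.ev Y ⊗ₘ 𝟙 (L.d X)) ≫ (λ_ (L.d X)).hom

/-- A choice of right duals: `d X = ʳX` with evaluation `ev X : X ⊗ₘ ʳX ⟶ 𝟙`
and coevaluation `coev X : 𝟙 ⟶ ʳX ⊗ₘ X`, satisfying the triangle identities. -/
structure RightDualData (C : Type*) [Category C] [MonoidalCategory C] where
  d : C → C
  ev : ∀ X : C, X ⊗ d X ⟶ 𝟙_ C
  coev : ∀ X : C, 𝟙_ C ⟶ d X ⊗ X
  tri1 : ∀ X : C, (ρ_ X).inv ≫ (𝟙 X ⊗ₘ coev X) ≫ (α_ X (d X) X).inv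
    ≫ (ev X ⊗ₘ 𝟙 X) ≫ (λ_ X).hom = 𝟙 X
  tri2 : ∀ X : C, (λ_ (d X)).inv ≫ (coev X ⊗ₘ 𝟙 (d X)) ≫ (α_ (d X) X (d X)).hom
    ≫ (𝟙 (d X) ⊗ₘ ev X) ≫ (ρ_ (d X)).hom = 𝟙 (d X)

/-- Right transpose (right dual) of a morphism. -/
def RightDualData.tr (R : RightDualData C) {X Y : C} (f : X ⟶ Y) : R.d Y ⟶ R.d X :=
  (λ_ (R.d Y)).inv ≫ (R.coev X ⊗ₘ 𝟙 (R.d Y)) ≫ (α_ (R.d X) X (R.d Y)).hom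
    ≫ (𝟙 (R.d X) ⊗ₘ (f ⊗ₘ 𝟙 (R.d Y))) ≫ (𝟙 (R.d X) ⊗ₘ R.ev Y) ≫ (ρ_ (R.d X)).hom

/-- The axioms for a left antipode `s X : T(ˡT(X)) ⟶ ˡX` of a bimonad. -/
structure IsLeftAntipode (T : Monad C) (Q : Comonoidal T.toFunctor) (L : LeftDualData C)
    (s : ∀ X : C, T.obj (L.d (T.obj X)) ⟶ L.d X) : Prop where
  natural : ∀ {X Y : C} (f : X ⟶ Y),
    T.map (L.tr (T.map f)) ≫ s X = s Y ≫ L.tr f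
  lant1 : ∀ X : C,
    T.map (L.tr (T.η.app X) ⊗ₘ 𝟙 X) ≫ T.map (L.ev X) ≫ Q.ε
      = Q.δ (L.d (T.obj X)) X
        ≫ ((T.map (L.tr (T.μ.app X)) ≫ s (T.obj X)) ⊗ₘ 𝟙 (T.obj X)) ≫ L.ev (T.obj X)
  lant2 : ∀ X : C,
    Q.ε ≫ L.coev X ≫ (T.η.app X ⊗ₘ 𝟙 (L.d X))
      = T.map (L.coev (T.obj X)) ≫ Q.δ (T.obj X) (L.d (T.obj X)) ≫ (T.μ.app X ⊗ₘ s X)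

/-- The axioms for a right antipode `s X : T(ʳT(X)) ⟶ ʳX` of a bimonad. -/
structure IsRightAntipode (T : Monad C) (Q : Comonoidal T.toFunctor) (R : RightDualData C)
    (s : ∀ X : C, T.obj (R.d (T.obj X)) ⟶ R.d X) : Prop where
  natural : ∀ {X Y : C} (f : X ⟶ Y),
    T.map (R.tr (T.map f)) ≫ s X = s Y ≫ R.tr f
  rant1 : ∀ X : C,
    T.map (𝟙 X ⊗ₘ R.tr (T.η.app X)) ≫ T.map (R.ev X) ≫ Q.ε
      = Q.δ X (R.d (T.obj X))
        ≫ (𝟙 (T.obj X) ⊗ₘ (T.map (R.tr (T.μ.app X)) ≫ s (T.obj X))) ≫ R.ev (T.obj X)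
  rant2 : ∀ X : C,
    Q.ε ≫ R.coev X ≫ (𝟙 (R.d X) ⊗ₘ T.η.app X)
      = T.map (R.coev (T.obj X)) ≫ Q.δ (R.d (T.obj X)) (T.obj X) ≫ (s X ⊗ₘ T.μ.app X)

/-- The canonical morphism `X ⟶ ʳ(ˡX)`. -/
def canRL (L : LeftDualData C) (R : RightDualData C) (X : C) : X ⟶ R.d (L.d X) :=
  (λ_ X).inv ≫ (R.coev (L.d X) ⊗ₘ 𝟙 X) ≫ (α_ (R.d (L.d X)) (L.d X) X).hom
    ≫ (𝟙 (R.d (L.d X)) ⊗ₘ L.ev X) ≫ (ρ_ (R.d (L.d X))).hom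

/-- The canonical morphism `ʳ(ˡX) ⟶ X`. -/
def canRLinv (L : LeftDualData C) (R : RightDualData C) (X : C) : R.d (L.d X) ⟶ X :=
  (λ_ (R.d (L.d X))).inv ≫ (L.coev X ⊗ₘ 𝟙 (R.d (L.d X)))
    ≫ (α_ X (L.d X) (R.d (L.d X))).hom ≫ (𝟙 X ⊗ₘ R.ev (L.d X)) ≫ (ρ_ X).hom

/-- The canonical morphism `X ⟶ ˡ(ʳX)`. -/
def canLR (L : LeftDualData C) (R : RightDualData C) (X : C) : X ⟶ L.d (R.d X) :=
  (ρ_ X).inv ≫ (𝟙 X ⊗ₘ L.coev (R.d X)) ≫ (α_ X (R.d X) (L.d (R.d X))).inv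
    ≫ (R.ev X ⊗ₘ 𝟙 (L.d (R.d X))) ≫ (λ_ (L.d (R.d X))).hom

/-- The canonical morphism `ˡ(ʳX) ⟶ X`. -/
def canLRinv (L : LeftDualData C) (R : RightDualData C) (X : C) : L.d (R.d X) ⟶ X :=
  (ρ_ (L.d (R.d X))).inv ≫ (𝟙 (L.d (R.d X)) ⊗ₘ R.coev X)
    ≫ (α_ (L.d (R.d X)) (R.d X) X).inv ≫ (L.ev (R.d X) ⊗ₘ 𝟙 X) ≫ (λ_ X).hom


/-- The component at `X` of `S(f) = ʳ(s^l ∘ f ˡT)`, i.e. `S(f)_X = ʳ(s^l_X ∘ f_{ˡT(X)})`,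
written via the canonical isomorphisms `X ≅ ʳ(ˡX)`. -/
def Smap (T : Monad C) (L : LeftDualData C) (R : RightDualData C)
    (sl : ∀ X : C, T.obj (L.d (T.obj X)) ⟶ L.d X)
    (f : 𝟭 C ⟶ T.toFunctor) (X : C) : X ⟶ T.obj X :=
  canRL L R X ≫ R.tr (f.app (L.d (T.obj X)) ≫ sl X) ≫ canRLinv L R (T.obj X)

/-- The component at `X` of `S⁻¹(f)`, i.e. `S⁻¹(f)_X = ˡ(s^r_X ∘ f_{ʳT(X)})`,
written via the canonical isomorphisms `X ≅ ˡ(ʳX)`. -/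
def SinvMap (T : Monad C) (L : LeftDualData C) (R : RightDualData C)
    (sr : ∀ X : C, T.obj (R.d (T.obj X)) ⟶ R.d X)
    (f : 𝟭 C ⟶ T.toFunctor) (X : C) : X ⟶ T.obj X :=
  canLR L R X ≫ L.tr (f.app (R.d (T.obj X)) ≫ sr X) ≫ canLRinv L R (T.obj X)

/-- A grouplike element of a bimonad. -/
def IsGrouplike (T : Monad C) (Q : Comonoidal T.toFunctor)
    (g : 𝟭 C ⟶ T.toFunctor) : Prop :=
  (∀ X Y : C, g.app (X ⊗ Y) ≫ Q.δ X Y = g.app X ⊗ₘ g.app Y) ∧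
  g.app (𝟙_ C) ≫ Q.ε = 𝟙 (𝟙_ C)


open Category

section Duality

variable (L : LeftDualData C) (R : RightDualData C)

lemma LeftDualData.ce (X : C) :
    L.d X ◁ L.coev X ≫ (α_ (L.d X) X (L.d X)).inv ≫ L.ev X ▷ L.d X
      = (ρ_ (L.d X)).hom ≫ (λ_ (L.d X)).inv := by
  have h := L.tri1 X
  rw [id_tensorHom, tensorHom_id] at h
  rw [← cancel_epi (ρ_ (L.d X)).inv, ← cancel_mono (λ_ (L.d X)).hom]
  simpa using h

lemma LeftDualData.ec (X : C) :
    L.coev X ▷ X ≫ (α_ X (L.d X) X).hom ≫ X ◁ L.ev X = (λ_ X).hom ≫ (ρ_ X).inv := by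
  have h := L.tri2 X
  rw [id_tensorHom, tensorHom_id] at h
  rw [← cancel_epi (λ_ X).inv, ← cancel_mono (ρ_ X).hom]
  simpa using h

lemma RightDualData.ce (X : C) :
    X ◁ R.coev X ≫ (α_ X (R.d X) X).inv ≫ R.ev X ▷ X = (ρ_ X).hom ≫ (λ_ X).inv := by
  have h := R.tri1 X
  rw [id_tensorHom, tensorHom_id] at h
  rw [← cancel_epi (ρ_ X).inv, ← cancel_mono (λ_ X).hom]
  simpa using h

lemma RightDualData.ec (X : C) :
    R.coev X ▷ R.d X ≫ (α_ (R.d X) X (R.d X)).hom ≫ R.d X ◁ R.ev X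
      = (λ_ (R.d X)).hom ≫ (ρ_ (R.d X)).inv := by
  have h := R.tri2 X
  rw [id_tensorHom, tensorHom_id] at h
  rw [← cancel_epi (λ_ (R.d X)).inv, ← cancel_mono (ρ_ (R.d X)).hom]
  simpa using h

/-- The exact pairing `(X, ˡX)` coming from `LeftDualData`. -/
def LeftDualData.exact (X : C) : ExactPairing X (L.d X) where
  coevaluation' := L.coev X
  evaluation' := L.ev X
  coevaluation_evaluation' := L.ce X
  evaluation_coevaluation' := L.ec X

/-- The exact pairing `(ʳX, X)` coming from `RightDualData`. -/
def RightDualData.exact (X : C) : ExactPairing (R.d X) X where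
  coevaluation' := R.coev X
  evaluation' := R.ev X
  coevaluation_evaluation' := R.ce X
  evaluation_coevaluation' := R.ec X

/-- Reconstruction of a morphism from its left-dual pairing. -/
lemma recL_pair {A B : C} (w : A ⟶ B) :
    (λ_ A).inv ≫ (L.coev B ⊗ₘ 𝟙 A) ≫ (α_ B (L.d B) A).hom
      ≫ (𝟙 B ⊗ₘ ((𝟙 (L.d B) ⊗ₘ w) ≫ L.ev B)) ≫ (ρ_ B).hom = w := by
  calc (λ_ A).inv ≫ (L.coev B ⊗ₘ 𝟙 A) ≫ (α_ B (L.d B) A).hom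
      ≫ (𝟙 B ⊗ₘ ((𝟙 (L.d B) ⊗ₘ w) ≫ L.ev B)) ≫ (ρ_ B).hom
    = (λ_ A).inv ≫ (𝟙 (𝟙_ C) ⊗ₘ w) ≫ (L.coev B ⊗ₘ 𝟙 B) ≫ (α_ B (L.d B) B).hom
      ≫ (𝟙 B ⊗ₘ L.ev B) ≫ (ρ_ B).hom := by
        rw [id_tensor_comp]
        slice_lhs 3 4 => rw [← associator_naturality]
        slice_lhs 2 3 => rw [tensorHom_comp_tensorHom]
        slice_rhs 2 3 => rw [tensorHom_comp_tensorHom]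
        simp
    _ = w := by
        have hl : (λ_ A).inv ≫ (𝟙 (𝟙_ C) ⊗ₘ w) = w ≫ (λ_ B).inv := by
          rw [id_tensorHom, leftUnitor_inv_naturality]
        rw [reassoc_of% hl, L.tri2 B, comp_id]

/-- Reconstruction of a morphism from its right-dual pairing. -/
lemma recR_pair {A B : C} (w : A ⟶ B) :
    (ρ_ A).inv ≫ (𝟙 A ⊗ₘ R.coev B) ≫ (α_ A (R.d B) B).inv
      ≫ (((w ⊗ₘ 𝟙 (R.d B)) ≫ R.ev B) ⊗ₘ 𝟙 B) ≫ (λ_ B).hom = w := by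
  calc (ρ_ A).inv ≫ (𝟙 A ⊗ₘ R.coev B) ≫ (α_ A (R.d B) B).inv
      ≫ (((w ⊗ₘ 𝟙 (R.d B)) ≫ R.ev B) ⊗ₘ 𝟙 B) ≫ (λ_ B).hom
    = (ρ_ A).inv ≫ (w ⊗ₘ 𝟙 (𝟙_ C)) ≫ (𝟙 B ⊗ₘ R.coev B) ≫ (α_ B (R.d B) B).inv
      ≫ (R.ev B ⊗ₘ 𝟙 B) ≫ (λ_ B).hom := by
        rw [comp_tensor_id]
        slice_lhs 3 4 => rw [← associator_inv_naturality]
        slice_lhs 2 3 => rw [tensorHom_comp_tensorHom]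
        slice_rhs 2 3 => rw [tensorHom_comp_tensorHom]
        simp
    _ = w := by
        have hr : (ρ_ A).inv ≫ (w ⊗ₘ 𝟙 (𝟙_ C)) = w ≫ (ρ_ B).inv := by
          rw [tensorHom_id, rightUnitor_inv_naturality]
        rw [reassoc_of% hr, R.tri1 B, comp_id]

lemma evL_inj {A B : C} {v w : A ⟶ B}
    (h : (𝟙 (L.d B) ⊗ₘ v) ≫ L.ev B = (𝟙 (L.d B) ⊗ₘ w) ≫ L.ev B) : v = w := by
  rw [← recL_pair L v, h, recL_pair L w]

lemma evR_inj {A B : C} {v w : A ⟶ B}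
    (h : (v ⊗ₘ 𝟙 (R.d B)) ≫ R.ev B = (w ⊗ₘ 𝟙 (R.d B)) ≫ R.ev B) : v = w := by
  rw [← recR_pair R v, h, recR_pair R w]

lemma trL_pair {A B : C} (f : A ⟶ B) :
    (L.tr f ⊗ₘ 𝟙 A) ≫ L.ev A = (𝟙 (L.d B) ⊗ₘ f) ≫ L.ev B := by
  letI := L.exact A
  letI := L.exact B
  letI : HasRightDual A := ⟨L.d A⟩
  letI : HasRightDual B := ⟨L.d B⟩
  have htr : L.tr f = fᘁ := by
    simp only [LeftDualData.tr, rightAdjointMate, id_tensorHom, tensorHom_id]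
    rfl
  rw [htr, tensorHom_id, id_tensorHom]
  exact rightAdjointMate_comp_evaluation f

lemma trR_pair {A B : C} (f : A ⟶ B) :
    (𝟙 A ⊗ₘ R.tr f) ≫ R.ev A = (f ⊗ₘ 𝟙 (R.d B)) ≫ R.ev B := by
  letI := R.exact A
  letI := R.exact B
  letI : HasLeftDual A := ⟨R.d A⟩
  letI : HasLeftDual B := ⟨R.d B⟩
  have htr : R.tr f = ᘁf := by
    simp only [RightDualData.tr, leftAdjointMate, id_tensorHom, tensorHom_id]
    slice_rhs 3 4 => rw [associator_naturality_middle]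
    simp only [Category.assoc]
    rfl
  rw [htr, tensorHom_id, id_tensorHom]
  exact leftAdjointMate_comp_evaluation f

end Duality
section Can

variable (L : LeftDualData C) (R : RightDualData C)

lemma canRL_pair (X : C) :
    (𝟙 (L.d X) ⊗ₘ canRL L R X) ≫ R.ev (L.d X) = L.ev X := by
  rw [id_tensorHom]
  calc L.d X ◁ canRL L R X ≫ R.ev (L.d X)
    = 𝟙 _ ⊗≫ L.d X ◁ R.coev (L.d X) ▷ X
      ⊗≫ ((L.d X ⊗ R.d (L.d X)) ◁ L.ev X ≫ R.ev (L.d X) ▷ 𝟙_ C) ⊗≫ 𝟙 _ := by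
        simp only [canRL, id_tensorHom, tensorHom_id]
        monoidal
    _ = 𝟙 _ ⊗≫ L.d X ◁ R.coev (L.d X) ▷ X
      ⊗≫ (R.ev (L.d X) ▷ (L.d X ⊗ X) ≫ 𝟙_ C ◁ L.ev X) ⊗≫ 𝟙 _ := by
        rw [whisker_exchange]
    _ = 𝟙 _ ⊗≫ (L.d X ◁ R.coev (L.d X) ≫ (α_ _ _ _).inv ≫ R.ev (L.d X) ▷ L.d X) ▷ X
      ⊗≫ 𝟙_ C ◁ L.ev X ⊗≫ 𝟙 _ := by
        monoidal
    _ = L.ev X := by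
        rw [R.ce (L.d X)]
        monoidal

end Can

section Can2
variable (L : LeftDualData C) (R : RightDualData C)

lemma canRLinv_pair (Z : C) :
    (𝟙 (L.d Z) ⊗ₘ canRLinv L R Z) ≫ L.ev Z = R.ev (L.d Z) := by
  rw [id_tensorHom]
  calc L.d Z ◁ canRLinv L R Z ≫ L.ev Z
    = 𝟙 _ ⊗≫ L.d Z ◁ L.coev Z ▷ R.d (L.d Z)
      ⊗≫ ((L.d Z ⊗ Z) ◁ R.ev (L.d Z) ≫ L.ev Z ▷ 𝟙_ C) ⊗≫ 𝟙 _ := by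
        simp only [canRLinv, id_tensorHom, tensorHom_id]
        monoidal
    _ = 𝟙 _ ⊗≫ L.d Z ◁ L.coev Z ▷ R.d (L.d Z)
      ⊗≫ (L.ev Z ▷ (L.d Z ⊗ R.d (L.d Z)) ≫ 𝟙_ C ◁ R.ev (L.d Z)) ⊗≫ 𝟙 _ := by
        rw [whisker_exchange]
    _ = 𝟙 _ ⊗≫ (L.d Z ◁ L.coev Z ≫ (α_ _ _ _).inv ≫ L.ev Z ▷ L.d Z) ▷ R.d (L.d Z)
      ⊗≫ 𝟙_ C ◁ R.ev (L.d Z) ⊗≫ 𝟙 _ := by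
        monoidal
    _ = R.ev (L.d Z) := by
        rw [L.ce Z]
        monoidal

lemma canLRinv_pair (Z : C) :
    (canLRinv L R Z ⊗ₘ 𝟙 (R.d Z)) ≫ R.ev Z = L.ev (R.d Z) := by
  rw [tensorHom_id]
  calc canLRinv L R Z ▷ R.d Z ≫ R.ev Z
    = 𝟙 _ ⊗≫ L.d (R.d Z) ◁ R.coev Z ▷ R.d Z
      ⊗≫ (L.ev (R.d Z) ▷ (Z ⊗ R.d Z) ≫ 𝟙_ C ◁ R.ev Z) ⊗≫ 𝟙 _ := by
        simp only [canLRinv, id_tensorHom, tensorHom_id]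
        monoidal
    _ = 𝟙 _ ⊗≫ L.d (R.d Z) ◁ R.coev Z ▷ R.d Z
      ⊗≫ ((L.d (R.d Z) ⊗ R.d Z) ◁ R.ev Z ≫ L.ev (R.d Z) ▷ 𝟙_ C) ⊗≫ 𝟙 _ := by
        rw [← whisker_exchange]
    _ = 𝟙 _ ⊗≫ L.d (R.d Z) ◁ (R.coev Z ▷ R.d Z ≫ (α_ _ _ _).hom ≫ R.d Z ◁ R.ev Z)
      ⊗≫ L.ev (R.d Z) ▷ 𝟙_ C ⊗≫ 𝟙 _ := by
        monoidal
    _ = L.ev (R.d Z) := by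
        rw [R.ec Z]
        monoidal

lemma canLR_pair (X : C) :
    (canLR L R X ⊗ₘ 𝟙 (R.d X)) ≫ L.ev (R.d X) = R.ev X := by
  rw [tensorHom_id]
  calc canLR L R X ▷ R.d X ≫ L.ev (R.d X)
    = 𝟙 _ ⊗≫ X ◁ L.coev (R.d X) ▷ R.d X
      ⊗≫ (R.ev X ▷ (L.d (R.d X) ⊗ R.d X) ≫ 𝟙_ C ◁ L.ev (R.d X)) ⊗≫ 𝟙 _ := by
        simp only [canLR, id_tensorHom, tensorHom_id]
        monoidal
    _ = 𝟙 _ ⊗≫ X ◁ L.coev (R.d X) ▷ R.d X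
      ⊗≫ ((X ⊗ R.d X) ◁ L.ev (R.d X) ≫ R.ev X ▷ 𝟙_ C) ⊗≫ 𝟙 _ := by
        rw [← whisker_exchange]
    _ = 𝟙 _ ⊗≫ X ◁ (L.coev (R.d X) ▷ R.d X ≫ (α_ _ _ _).hom ≫ R.d X ◁ L.ev (R.d X))
      ⊗≫ R.ev X ▷ 𝟙_ C ⊗≫ 𝟙 _ := by
        monoidal
    _ = R.ev X := by
        rw [L.ec (R.d X)]
        monoidal

end Can2
section Mate
variable (L : LeftDualData C) (R : RightDualData C)

lemma mateL_pair {X Y : C} (u : L.d Y ⟶ L.d X) :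
    (𝟙 (L.d Y) ⊗ₘ (canRL L R X ≫ R.tr u ≫ canRLinv L R Y)) ≫ L.ev Y
      = (u ⊗ₘ 𝟙 X) ≫ L.ev X := by
  rw [id_tensor_comp, id_tensor_comp]
  slice_lhs 3 4 => rw [canRLinv_pair]
  slice_lhs 2 3 => rw [trR_pair]
  slice_lhs 1 2 => rw [tensorHom_comp_tensorHom, id_comp, comp_id, ← comp_id u, ← id_comp (canRL L R X),
    ← tensorHom_comp_tensorHom]
  slice_lhs 2 3 => rw [canRL_pair]

lemma mateR_pair {X Y : C} (u : R.d Y ⟶ R.d X) :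
    ((canLR L R X ≫ L.tr u ≫ canLRinv L R Y) ⊗ₘ 𝟙 (R.d Y)) ≫ R.ev Y
      = (𝟙 X ⊗ₘ u) ≫ R.ev X := by
  rw [comp_tensor_id, comp_tensor_id]
  slice_lhs 3 4 => rw [canLRinv_pair]
  slice_lhs 2 3 => rw [trL_pair]
  slice_lhs 1 2 => rw [tensorHom_comp_tensorHom, id_comp, comp_id, ← comp_id u, ← id_comp (canLR L R X),
    ← tensorHom_comp_tensorHom]
  slice_lhs 2 3 => rw [canLR_pair]

end Mate
section Conv

/-- Convolution product on `Hom(1_C, T)`. -/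
def conv (T : Monad C) (φ ψ : 𝟭 C ⟶ T.toFunctor) : 𝟭 C ⟶ T.toFunctor where
  app X := ψ.app X ≫ φ.app (T.obj X) ≫ T.μ.app X
  naturality X Y f := by
    have h1 := ψ.naturality f
    have h2 := φ.naturality (T.map f)
    have h3 := T.μ.naturality f
    simp only [Functor.id_map] at h1 h2
    simp only [Functor.comp_map] at h3
    simp only [Functor.id_map, reassoc_of% h1, reassoc_of% h2, assoc]
    rw [h3]

@[simp] lemma conv_app (T : Monad C) (φ ψ : 𝟭 C ⟶ T.toFunctor) (X : C) :
    (conv T φ ψ).app X = ψ.app X ≫ φ.app (T.obj X) ≫ T.μ.app X := rfl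

lemma conv_eta_left (T : Monad C) (φ : 𝟭 C ⟶ T.toFunctor) : conv T T.η φ = φ := by
  ext X
  simp

lemma conv_eta_right (T : Monad C) (φ : 𝟭 C ⟶ T.toFunctor) : conv T φ T.η = φ := by
  ext X
  have h := φ.naturality (T.η.app X)
  simp only [Functor.id_map] at h
  simp [reassoc_of% h]

lemma grouplike_eta (T : Monad C) (Q : Comonoidal T.toFunctor) (hB : IsBimonad T Q) :
    IsGrouplike T Q T.η :=
  ⟨hB.eta_δ, hB.eta_ε⟩

lemma grouplike_conv (T : Monad C) (Q : Comonoidal T.toFunctor) (hB : IsBimonad T Q)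
    {g g' : 𝟭 C ⟶ T.toFunctor} (hg : IsGrouplike T Q g) (hg' : IsGrouplike T Q g') :
    IsGrouplike T Q (conv T g g') := by
  constructor
  · intro X Y
    have hnat := g.naturality (Q.δ X Y)
    simp only [Functor.id_map] at hnat
    simp only [conv_app]
    slice_lhs 3 4 => rw [hB.mu_δ X Y]
    slice_lhs 2 3 => rw [← hnat]
    slice_lhs 1 2 => rw [hg'.1 X Y]
    slice_lhs 2 3 => rw [hg.1 (T.obj X) (T.obj Y)]
    slice_lhs 1 2 => rw [tensorHom_comp_tensorHom]
    slice_lhs 1 2 => rw [tensorHom_comp_tensorHom]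
    simp only [assoc]
  · have hnat := g.naturality Q.ε
    simp only [Functor.id_map] at hnat
    simp only [conv_app]
    slice_lhs 3 4 => rw [hB.mu_ε]
    slice_lhs 2 3 => rw [← hnat]
    slice_lhs 3 4 => rw [hg.2]
    simpa using hg'.2

lemma grouplike_iff (T : Monad C) (Q : Comonoidal T.toFunctor)
    (g : 𝟭 C ⟶ T.toFunctor) :
    IsGrouplike T Q g ↔
      ((∀ M N : T.Algebra,
        g.app (M.A ⊗ N.A) ≫ Q.δ M.A N.A ≫ (M.a ⊗ₘ N.a)
          = (g.app M.A ≫ M.a) ⊗ₘ (g.app N.A ≫ N.a)) ∧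
       g.app (𝟙_ C) ≫ Q.ε = 𝟙 (𝟙_ C)) := by
  constructor
  · rintro ⟨h1, h2⟩
    refine ⟨fun M N => ?_, h2⟩
    rw [reassoc_of% (h1 M.A N.A), tensorHom_comp_tensorHom]
  · rintro ⟨h1, h2⟩
    refine ⟨fun X Y => ?_, h2⟩
    have H := h1 ((Monad.free T).obj X) ((Monad.free T).obj Y)
    simp only [Monad.free_obj_A, Monad.free_obj_a] at H
    change g.app (T.obj X ⊗ T.obj Y) ≫ Q.δ (T.obj X) (T.obj Y) ≫ (T.μ.app X ⊗ₘ T.μ.app Y)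
      = (g.app (T.obj X) ≫ T.μ.app X) ⊗ₘ (g.app (T.obj Y) ≫ T.μ.app Y) at H
    have hnatg := g.naturality (T.η.app X ⊗ₘ T.η.app Y)
    simp only [Functor.id_map] at hnatg
    have hgx := g.naturality (T.η.app X)
    have hgy := g.naturality (T.η.app Y)
    simp only [Functor.id_map] at hgx hgy
    have e1 : T.η.app X ≫ g.app (T.obj X) ≫ T.μ.app X = g.app X := by
      rw [reassoc_of% hgx]; simp
    have e2 : T.η.app Y ≫ g.app (T.obj Y) ≫ T.μ.app Y = g.app Y := by
      rw [reassoc_of% hgy]; simp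
    have key : (T.η.app X ⊗ₘ T.η.app Y) ≫ g.app (T.obj X ⊗ T.obj Y)
        ≫ Q.δ (T.obj X) (T.obj Y) ≫ (T.μ.app X ⊗ₘ T.μ.app Y)
        = g.app X ⊗ₘ g.app Y := by
      rw [H, tensorHom_comp_tensorHom, e1, e2]
    rw [← key]
    rw [reassoc_of% hnatg, reassoc_of% (Q.δ_natural (T.η.app X) (T.η.app Y))]
    slice_rhs 3 4 => rw [tensorHom_comp_tensorHom]
    simp

end Conv
section Hopf1

variable (L : LeftDualData C) (R : RightDualData C)

lemma Smap_pair (T : Monad C) (sl : ∀ X : C, T.obj (L.d (T.obj X)) ⟶ L.d X)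
    (g : 𝟭 C ⟶ T.toFunctor) (X : C) :
    (𝟙 (L.d (T.obj X)) ⊗ₘ Smap T L R sl g X) ≫ L.ev (T.obj X)
      = ((g.app (L.d (T.obj X)) ≫ sl X) ⊗ₘ 𝟙 X) ≫ L.ev X := by
  simp only [Smap]
  exact mateL_pair L R _

lemma SinvMap_pair (T : Monad C) (sr : ∀ X : C, T.obj (R.d (T.obj X)) ⟶ R.d X)
    (g : 𝟭 C ⟶ T.toFunctor) (X : C) :
    (SinvMap T L R sr g X ⊗ₘ 𝟙 (R.d (T.obj X))) ≫ R.ev (T.obj X)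
      = (𝟙 X ⊗ₘ (g.app (R.d (T.obj X)) ≫ sr X)) ≫ R.ev X := by
  simp only [SinvMap]
  exact mateR_pair L R _

variable {T : Monad C} {Q : Comonoidal T.toFunctor}

lemma K1 {sl : ∀ X : C, T.obj (L.d (T.obj X)) ⟶ L.d X}
    (hsl : IsLeftAntipode T Q L sl) {g : 𝟭 C ⟶ T.toFunctor}
    (hg : IsGrouplike T Q g) (X : C) :
    L.coev X ≫ (T.η.app X ⊗ₘ 𝟙 (L.d X))
      = L.coev (T.obj X)
        ≫ ((g.app (T.obj X) ≫ T.μ.app X) ⊗ₘ (g.app (L.d (T.obj X)) ≫ sl X)) := by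
  have h := congrArg (fun t => g.app (𝟙_ C) ≫ t) (hsl.lant2 X)
  have hn := g.naturality (L.coev (T.obj X))
  simp only [Functor.id_map] at hn
  rw [reassoc_of% hg.2, ← reassoc_of% hn,
    reassoc_of% (hg.1 (T.obj X) (L.d (T.obj X))), tensorHom_comp_tensorHom] at h
  simpa using h

lemma K2 {sl : ∀ X : C, T.obj (L.d (T.obj X)) ⟶ L.d X}
    (hsl : IsLeftAntipode T Q L sl) {g : 𝟭 C ⟶ T.toFunctor}
    (hg : IsGrouplike T Q g) (X : C) :
    ((L.tr (T.μ.app X) ≫ g.app (L.d (T.obj (T.obj X))) ≫ sl (T.obj X)) ⊗ₘ g.app X)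
        ≫ L.ev (T.obj X)
      = (L.tr (T.η.app X) ⊗ₘ 𝟙 X) ≫ L.ev X := by
  have h := congrArg (fun t => g.app (L.d (T.obj X) ⊗ X) ≫ t) (hsl.lant1 X)
  have hn1 := g.naturality (L.tr (T.η.app X) ⊗ₘ 𝟙 X)
  have hn2 := g.naturality (L.ev X)
  have hn3 := g.naturality (L.tr (T.μ.app X))
  simp only [Functor.id_map] at hn1 hn2 hn3
  rw [← reassoc_of% hn1, ← reassoc_of% hn2, hg.2, comp_id,
    reassoc_of% (hg.1 (L.d (T.obj X)) X), tensorHom_comp_tensorHom_assoc, comp_id,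
    ← reassoc_of% hn3] at h
  simp only [Functor.id_obj] at h
  exact h.symm

lemma K3 {sr : ∀ X : C, T.obj (R.d (T.obj X)) ⟶ R.d X}
    (hsr : IsRightAntipode T Q R sr) {g : 𝟭 C ⟶ T.toFunctor}
    (hg : IsGrouplike T Q g) (X : C) :
    R.coev X ≫ (𝟙 (R.d X) ⊗ₘ T.η.app X)
      = R.coev (T.obj X)
        ≫ ((g.app (R.d (T.obj X)) ≫ sr X) ⊗ₘ (g.app (T.obj X) ≫ T.μ.app X)) := by
  have h := congrArg (fun t => g.app (𝟙_ C) ≫ t) (hsr.rant2 X)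
  have hn := g.naturality (R.coev (T.obj X))
  simp only [Functor.id_map] at hn
  rw [reassoc_of% hg.2, ← reassoc_of% hn,
    reassoc_of% (hg.1 (R.d (T.obj X)) (T.obj X)), tensorHom_comp_tensorHom] at h
  simpa using h

lemma A0 {sl : ∀ X : C, T.obj (L.d (T.obj X)) ⟶ L.d X}
    (hsl : IsLeftAntipode T Q L sl) (g : 𝟭 C ⟶ T.toFunctor) {X Y : C} (f : X ⟶ Y) :
    L.tr (T.map f) ≫ g.app (L.d (T.obj X)) ≫ sl X
      = (g.app (L.d (T.obj Y)) ≫ sl Y) ≫ L.tr f := by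
  have hn := g.naturality (L.tr (T.map f))
  simp only [Functor.id_map] at hn
  rw [reassoc_of% hn, assoc, hsl.natural f]

end Hopf1
section Hopf2
variable (L : LeftDualData C) (R : RightDualData C)

lemma coevform_evalL {X W : C} (w : X ⟶ W) :
    (λ_ X).inv ≫ ((L.coev X ≫ (w ⊗ₘ 𝟙 (L.d X))) ⊗ₘ 𝟙 X) ≫ (α_ W (L.d X) X).hom
      ≫ (𝟙 W ⊗ₘ L.ev X) ≫ (ρ_ W).hom = w := by
  calc (λ_ X).inv ≫ ((L.coev X ≫ (w ⊗ₘ 𝟙 (L.d X))) ⊗ₘ 𝟙 X) ≫ (α_ W (L.d X) X).hom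
      ≫ (𝟙 W ⊗ₘ L.ev X) ≫ (ρ_ W).hom
    = 𝟙 _ ⊗≫ L.coev X ▷ X ⊗≫ (w ▷ (L.d X ⊗ X) ≫ W ◁ L.ev X) ⊗≫ 𝟙 _ := by
        simp only [id_tensorHom, tensorHom_id, comp_whiskerRight, assoc]
        monoidal
    _ = 𝟙 _ ⊗≫ L.coev X ▷ X ⊗≫ (X ◁ L.ev X ≫ w ▷ 𝟙_ C) ⊗≫ 𝟙 _ := by
        rw [← whisker_exchange]
    _ = 𝟙 _ ⊗≫ (L.coev X ▷ X ≫ (α_ X (L.d X) X).hom ≫ X ◁ L.ev X) ⊗≫ w ▷ 𝟙_ C ⊗≫ 𝟙 _ := by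
        monoidal
    _ = w := by
        rw [L.ec X]
        monoidal

lemma coevform_evalR {X W : C} (w : X ⟶ W) :
    (ρ_ X).inv ≫ (𝟙 X ⊗ₘ (R.coev X ≫ (𝟙 (R.d X) ⊗ₘ w))) ≫ (α_ X (R.d X) W).inv
      ≫ (R.ev X ⊗ₘ 𝟙 W) ≫ (λ_ W).hom = w := by
  calc (ρ_ X).inv ≫ (𝟙 X ⊗ₘ (R.coev X ≫ (𝟙 (R.d X) ⊗ₘ w))) ≫ (α_ X (R.d X) W).inv
      ≫ (R.ev X ⊗ₘ 𝟙 W) ≫ (λ_ W).hom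
    = 𝟙 _ ⊗≫ X ◁ R.coev X ⊗≫ ((X ⊗ R.d X) ◁ w ≫ R.ev X ▷ W) ⊗≫ 𝟙 _ := by
        simp only [id_tensorHom, tensorHom_id, MonoidalCategory.whiskerLeft_comp, assoc]
        monoidal
    _ = 𝟙 _ ⊗≫ X ◁ R.coev X ⊗≫ (R.ev X ▷ X ≫ 𝟙_ C ◁ w) ⊗≫ 𝟙 _ := by
        rw [whisker_exchange]
    _ = 𝟙 _ ⊗≫ (X ◁ R.coev X ≫ (α_ X (R.d X) X).inv ≫ R.ev X ▷ X) ⊗≫ 𝟙_ C ◁ w ⊗≫ 𝟙 _ := by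
        monoidal
    _ = w := by
        rw [R.ce X]
        monoidal

lemma mate_postcompL {A B B' : C} (u : L.d B ⟶ L.d A) (q : B ⟶ B') :
    (canRL L R A ≫ R.tr u ≫ canRLinv L R B) ≫ q
      = (λ_ A).inv ≫ ((L.coev B ≫ (q ⊗ₘ u)) ⊗ₘ 𝟙 A) ≫ (α_ B' (L.d A) A).hom
        ≫ (𝟙 B' ⊗ₘ L.ev A) ≫ (ρ_ B').hom := by
  have hrec := recL_pair L (canRL L R A ≫ R.tr u ≫ canRLinv L R B)
  rw [mateL_pair L R u] at hrec
  rw [← hrec]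
  calc ((λ_ A).inv ≫ (L.coev B ⊗ₘ 𝟙 A) ≫ (α_ B (L.d B) A).hom
      ≫ (𝟙 B ⊗ₘ ((u ⊗ₘ 𝟙 A) ≫ L.ev A)) ≫ (ρ_ B).hom) ≫ q
    = 𝟙 _ ⊗≫ L.coev B ▷ A ⊗≫ B ◁ (u ▷ A) ⊗≫ (B ◁ L.ev A ≫ q ▷ 𝟙_ C) ⊗≫ 𝟙 _ := by
        simp only [id_tensorHom, tensorHom_id, MonoidalCategory.whiskerLeft_comp, assoc]
        monoidal
    _ = 𝟙 _ ⊗≫ L.coev B ▷ A ⊗≫ (B ◁ (u ▷ A) ≫ q ▷ (L.d A ⊗ A)) ⊗≫ B' ◁ L.ev A ⊗≫ 𝟙 _ := by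
        rw [whisker_exchange]
        monoidal
    _ = 𝟙 _ ⊗≫ L.coev B ▷ A ⊗≫ (q ▷ (L.d B ⊗ A) ≫ B' ◁ (u ▷ A)) ⊗≫ B' ◁ L.ev A ⊗≫ 𝟙 _ := by
        rw [whisker_exchange]
    _ = (λ_ A).inv ≫ ((L.coev B ≫ (q ⊗ₘ u)) ⊗ₘ 𝟙 A) ≫ (α_ B' (L.d A) A).hom
        ≫ (𝟙 B' ⊗ₘ L.ev A) ≫ (ρ_ B').hom := by
        simp only [id_tensorHom, tensorHom_id, MonoidalCategory.tensorHom_def, comp_whiskerRight, assoc]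
        monoidal

lemma mate_postcompR {A B B' : C} (u : R.d B ⟶ R.d A) (q : B ⟶ B') :
    (canLR L R A ≫ L.tr u ≫ canLRinv L R B) ≫ q
      = (ρ_ A).inv ≫ (𝟙 A ⊗ₘ (R.coev B ≫ (u ⊗ₘ q))) ≫ (α_ A (R.d A) B').inv
        ≫ (R.ev A ⊗ₘ 𝟙 B') ≫ (λ_ B').hom := by
  have hrec := recR_pair R (canLR L R A ≫ L.tr u ≫ canLRinv L R B)
  rw [mateR_pair L R u] at hrec
  rw [← hrec]
  calc ((ρ_ A).inv ≫ (𝟙 A ⊗ₘ R.coev B) ≫ (α_ A (R.d B) B).inv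
      ≫ (((𝟙 A ⊗ₘ u) ≫ R.ev A) ⊗ₘ 𝟙 B) ≫ (λ_ B).hom) ≫ q
    = 𝟙 _ ⊗≫ A ◁ R.coev B ⊗≫ A ◁ (u ▷ B) ⊗≫ (R.ev A ▷ B ≫ 𝟙_ C ◁ q) ⊗≫ 𝟙 _ := by
        simp only [id_tensorHom, tensorHom_id, comp_whiskerRight, assoc]
        monoidal
    _ = 𝟙 _ ⊗≫ A ◁ R.coev B ⊗≫ A ◁ (u ▷ B) ⊗≫ ((A ⊗ R.d A) ◁ q ≫ R.ev A ▷ B') ⊗≫ 𝟙 _ := by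
        rw [← whisker_exchange]
    _ = (ρ_ A).inv ≫ (𝟙 A ⊗ₘ (R.coev B ≫ (u ⊗ₘ q))) ≫ (α_ A (R.d A) B').inv
        ≫ (R.ev A ⊗ₘ 𝟙 B') ≫ (λ_ B').hom := by
        simp only [id_tensorHom, tensorHom_id, MonoidalCategory.tensorHom_def, MonoidalCategory.whiskerLeft_comp, assoc]
        monoidal

end Hopf2
section Hopf3
variable {T : Monad C} {Q : Comonoidal T.toFunctor} (L : LeftDualData C) (R : RightDualData C)
variable {sl : ∀ X : C, T.obj (L.d (T.obj X)) ⟶ L.d X}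
variable {sr : ∀ X : C, T.obj (R.d (T.obj X)) ⟶ R.d X}

lemma Smap_natural (hsl : IsLeftAntipode T Q L sl) (g : 𝟭 C ⟶ T.toFunctor)
    {X Y : C} (f : X ⟶ Y) :
    f ≫ Smap T L R sl g Y = Smap T L R sl g X ≫ T.map f := by
  apply evL_inj L
  have tp : (L.tr f ⊗ₘ 𝟙 X) ≫ L.ev X = (𝟙 (L.d Y) ⊗ₘ f) ≫ L.ev Y := by
    have := trL_pair L f; simpa using this
  trans ((g.app (L.d (T.obj Y)) ≫ sl Y) ⊗ₘ f) ≫ L.ev Y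
  · rw [id_tensor_comp]
    slice_lhs 2 3 => rw [Smap_pair L R T sl g Y]
    slice_lhs 1 2 => rw [id_tensor_comp_tensor_id]
  · symm
    calc (𝟙 (L.d (T.obj Y)) ⊗ₘ (Smap T L R sl g X ≫ T.map f)) ≫ L.ev (T.obj Y)
        = (𝟙 (L.d (T.obj Y)) ⊗ₘ Smap T L R sl g X)
            ≫ (𝟙 (L.d (T.obj Y)) ⊗ₘ T.map f) ≫ L.ev (T.obj Y) := by
          rw [id_tensor_comp, assoc]
      _ = (𝟙 (L.d (T.obj Y)) ⊗ₘ Smap T L R sl g X)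
            ≫ (L.tr (T.map f) ⊗ₘ 𝟙 (T.obj X)) ≫ L.ev (T.obj X) := by
          rw [trL_pair]
      _ = (L.tr (T.map f) ⊗ₘ 𝟙 X) ≫ (𝟙 (L.d (T.obj X)) ⊗ₘ Smap T L R sl g X)
            ≫ L.ev (T.obj X) := by
          rw [← assoc, id_tensor_comp_tensor_id, ← tensor_id_comp_id_tensor, assoc]
      _ = (L.tr (T.map f) ⊗ₘ 𝟙 X)
            ≫ ((g.app (L.d (T.obj X)) ≫ sl X) ⊗ₘ 𝟙 X) ≫ L.ev X := by
          rw [Smap_pair]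
      _ = ((L.tr (T.map f) ≫ g.app (L.d (T.obj X)) ≫ sl X) ⊗ₘ 𝟙 X) ≫ L.ev X := by
          rw [← assoc, ← comp_tensor_id]
      _ = (((g.app (L.d (T.obj Y)) ≫ sl Y) ≫ L.tr f) ⊗ₘ 𝟙 X) ≫ L.ev X := by
          rw [A0 L hsl g f]
      _ = ((g.app (L.d (T.obj Y)) ≫ sl Y) ⊗ₘ 𝟙 X) ≫ (L.tr f ⊗ₘ 𝟙 X) ≫ L.ev X := by
          rw [comp_tensor_id, assoc]
      _ = ((g.app (L.d (T.obj Y)) ≫ sl Y) ⊗ₘ 𝟙 X) ≫ (𝟙 (L.d Y) ⊗ₘ f) ≫ L.ev Y := by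
          rw [tp]
      _ = ((g.app (L.d (T.obj Y)) ≫ sl Y) ⊗ₘ f) ≫ L.ev Y := by
          rw [← assoc, tensor_id_comp_id_tensor]

lemma conv_g_Smap (hsl : IsLeftAntipode T Q L sl) {g : 𝟭 C ⟶ T.toFunctor}
    (hg : IsGrouplike T Q g) (X : C) :
    Smap T L R sl g X ≫ g.app (T.obj X) ≫ T.μ.app X = T.η.app X := by
  have e0 : Smap T L R sl g X ≫ g.app (T.obj X) ≫ T.μ.app X
      = (canRL L R X ≫ R.tr (g.app (L.d (T.obj X)) ≫ sl X) ≫ canRLinv L R (T.obj X))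
        ≫ (g.app (T.obj X) ≫ T.μ.app X) := by
    simp only [Smap, assoc]
  rw [e0, mate_postcompL L R, ← K1 L hsl hg X, coevform_evalL L]

lemma conv_g_SinvMap (hsr : IsRightAntipode T Q R sr) {g : 𝟭 C ⟶ T.toFunctor}
    (hg : IsGrouplike T Q g) (X : C) :
    SinvMap T L R sr g X ≫ g.app (T.obj X) ≫ T.μ.app X = T.η.app X := by
  have e0 : SinvMap T L R sr g X ≫ g.app (T.obj X) ≫ T.μ.app X
      = (canLR L R X ≫ L.tr (g.app (R.d (T.obj X)) ≫ sr X) ≫ canLRinv L R (T.obj X))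
        ≫ (g.app (T.obj X) ≫ T.μ.app X) := by
    simp only [SinvMap, assoc]
  rw [e0, mate_postcompR L R, ← K3 R hsr hg X, coevform_evalR R]

lemma conv_Smap_g (hsl : IsLeftAntipode T Q L sl) {g : 𝟭 C ⟶ T.toFunctor}
    (hg : IsGrouplike T Q g) (X : C) :
    g.app X ≫ Smap T L R sl g (T.obj X) ≫ T.μ.app X = T.η.app X := by
  apply evL_inj L
  have tpμ : (L.tr (T.μ.app X) ⊗ₘ 𝟙 (T.obj (T.obj X))) ≫ L.ev (T.obj (T.obj X))
      = (𝟙 (L.d (T.obj X)) ⊗ₘ T.μ.app X) ≫ L.ev (T.obj X) := by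
    have := trL_pair L (T.μ.app X); simpa using this
  have tpη : (L.tr (T.η.app X) ⊗ₘ 𝟙 X) ≫ L.ev X
      = (𝟙 (L.d (T.obj X)) ⊗ₘ T.η.app X) ≫ L.ev (T.obj X) := by
    have := trL_pair L (T.η.app X); simpa using this
  rw [id_tensor_comp, id_tensor_comp]
  simp only [assoc]
  rw [← tpμ]
  slice_lhs 2 3 => rw [id_tensor_comp_tensor_id]
  slice_lhs 2 2 => rw [← tensor_id_comp_id_tensor (Smap T L R sl g (T.obj X)) (L.tr (T.μ.app X))]
  simp only [Functor.comp_obj]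
  slice_lhs 3 4 => rw [Smap_pair L R T sl g (T.obj X)]
  slice_lhs 1 2 => rw [id_tensor_comp_tensor_id]
  slice_lhs 1 1 => rw [← tensor_id_comp_id_tensor (g.app X) (L.tr (T.μ.app X))]
  slice_lhs 2 3 => rw [id_tensor_comp_tensor_id]
  slice_lhs 1 2 => rw [tensorHom_comp_tensorHom]
  rw [id_comp]
  rw [K2 L hsl hg X, tpη]

end Hopf3
section Hopf4
variable {T : Monad C} {Q : Comonoidal T.toFunctor} (L : LeftDualData C) (R : RightDualData C)
variable {sl : ∀ X : C, T.obj (L.d (T.obj X)) ⟶ L.d X}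
variable {sr : ∀ X : C, T.obj (R.d (T.obj X)) ⟶ R.d X}

lemma Smap_eq_SinvMap (hsl : IsLeftAntipode T Q L sl) (hsr : IsRightAntipode T Q R sr)
    {g : 𝟭 C ⟶ T.toFunctor} (hg : IsGrouplike T Q g) (X : C) :
    Smap T L R sl g X = SinvMap T L R sr g X := by
  symm
  calc SinvMap T L R sr g X
      = SinvMap T L R sr g X ≫ T.η.app (T.obj X) ≫ T.μ.app X := by simp
    _ = SinvMap T L R sr g X ≫ (g.app (T.obj X) ≫ Smap T L R sl g (T.obj (T.obj X))
          ≫ T.μ.app (T.obj X)) ≫ T.μ.app X := by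
        rw [conv_Smap_g L R hsl hg (T.obj X)]
    _ = SinvMap T L R sr g X ≫ g.app (T.obj X) ≫ Smap T L R sl g (T.obj (T.obj X))
          ≫ T.map (T.μ.app X) ≫ T.μ.app X := by
        simp only [assoc]
        rw [← T.assoc]
    _ = SinvMap T L R sr g X ≫ g.app (T.obj X) ≫ T.μ.app X
          ≫ Smap T L R sl g (T.obj X) ≫ T.μ.app X := by
        rw [← reassoc_of% (Smap_natural L R hsl g (T.μ.app X))]
    _ = T.η.app X ≫ Smap T L R sl g (T.obj X) ≫ T.μ.app X := by
        rw [reassoc_of% (conv_g_SinvMap L R hsr hg X)]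
    _ = Smap T L R sl g X ≫ T.map (T.η.app X) ≫ T.μ.app X := by
        rw [reassoc_of% (Smap_natural L R hsl g (T.η.app X))]
    _ = Smap T L R sl g X := by simp

lemma Smap_counit (hB : IsBimonad T Q) (hsl : IsLeftAntipode T Q L sl)
    {g : 𝟭 C ⟶ T.toFunctor} (hg : IsGrouplike T Q g) :
    Smap T L R sl g (𝟙_ C) ≫ Q.ε = 𝟙 (𝟙_ C) := by
  have e := congrArg (fun t => t ≫ Q.ε) (conv_g_Smap L R hsl hg (𝟙_ C))
  simp only [assoc] at e
  have hn := g.naturality Q.ε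
  simp only [Functor.id_map] at hn
  rw [hB.mu_ε, ← reassoc_of% hn, hg.2, comp_id, hB.eta_ε] at e
  exact e

lemma claim1 (hB : IsBimonad T Q) (hsl : IsLeftAntipode T Q L sl)
    {g : 𝟭 C ⟶ T.toFunctor} (hg : IsGrouplike T Q g) (A B : C) :
    g.app (A ⊗ B) ≫ Q.δ A B ≫ Smap T L R sl g (T.obj A ⊗ T.obj B)
      ≫ Q.δ (T.obj A) (T.obj B) ≫ (T.μ.app A ⊗ₘ T.μ.app B)
    = T.η.app A ⊗ₘ T.η.app B := by
  rw [reassoc_of% (Smap_natural L R hsl g (Q.δ A B)), ← hB.mu_δ A B,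
    reassoc_of% (conv_Smap_g L R hsl hg (A ⊗ B)), hB.eta_δ A B]

lemma Smap_δ (hB : IsBimonad T Q) (hsl : IsLeftAntipode T Q L sl)
    {g : 𝟭 C ⟶ T.toFunctor} (hg : IsGrouplike T Q g) (X Y : C) :
    Smap T L R sl g (X ⊗ Y) ≫ Q.δ X Y = Smap T L R sl g X ⊗ₘ Smap T L R sl g Y := by
  symm
  calc Smap T L R sl g X ⊗ₘ Smap T L R sl g Y
      = (Smap T L R sl g X ⊗ₘ Smap T L R sl g Y)
          ≫ (T.η.app (T.obj X) ⊗ₘ T.η.app (T.obj Y)) ≫ (T.μ.app X ⊗ₘ T.μ.app Y) := by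
        rw [tensorHom_comp_tensorHom]
        simp
    _ = (Smap T L R sl g X ⊗ₘ Smap T L R sl g Y)
          ≫ (g.app (T.obj X ⊗ T.obj Y) ≫ Q.δ (T.obj X) (T.obj Y)
            ≫ Smap T L R sl g (T.obj (T.obj X) ⊗ T.obj (T.obj Y))
            ≫ Q.δ (T.obj (T.obj X)) (T.obj (T.obj Y))
            ≫ (T.μ.app (T.obj X) ⊗ₘ T.μ.app (T.obj Y)))
          ≫ (T.μ.app X ⊗ₘ T.μ.app Y) := by
        rw [claim1 L R hB hsl hg (T.obj X) (T.obj Y)]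
    _ = (Smap T L R sl g X ⊗ₘ Smap T L R sl g Y)
          ≫ g.app (T.obj X ⊗ T.obj Y) ≫ Q.δ (T.obj X) (T.obj Y)
          ≫ Smap T L R sl g (T.obj (T.obj X) ⊗ T.obj (T.obj Y))
          ≫ Q.δ (T.obj (T.obj X)) (T.obj (T.obj Y))
          ≫ (T.map (T.μ.app X) ⊗ₘ T.map (T.μ.app Y))
          ≫ (T.μ.app X ⊗ₘ T.μ.app Y) := by
        simp only [assoc]
        rw [tensorHom_comp_tensorHom, ← T.assoc, ← T.assoc, ← tensorHom_comp_tensorHom]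
    _ = (Smap T L R sl g X ⊗ₘ Smap T L R sl g Y)
          ≫ g.app (T.obj X ⊗ T.obj Y) ≫ Q.δ (T.obj X) (T.obj Y)
          ≫ Smap T L R sl g (T.obj (T.obj X) ⊗ T.obj (T.obj Y))
          ≫ T.map (T.μ.app X ⊗ₘ T.μ.app Y)
          ≫ Q.δ (T.obj X) (T.obj Y)
          ≫ (T.μ.app X ⊗ₘ T.μ.app Y) := by
        rw [← reassoc_of% (Q.δ_natural (T.μ.app X) (T.μ.app Y))]
    _ = (Smap T L R sl g X ⊗ₘ Smap T L R sl g Y)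
          ≫ g.app (T.obj X ⊗ T.obj Y) ≫ Q.δ (T.obj X) (T.obj Y)
          ≫ (T.μ.app X ⊗ₘ T.μ.app Y)
          ≫ Smap T L R sl g (T.obj X ⊗ T.obj Y)
          ≫ Q.δ (T.obj X) (T.obj Y)
          ≫ (T.μ.app X ⊗ₘ T.μ.app Y) := by
        rw [← reassoc_of% (Smap_natural L R hsl g (T.μ.app X ⊗ₘ T.μ.app Y))]
    _ = (Smap T L R sl g X ⊗ₘ Smap T L R sl g Y)
          ≫ (g.app (T.obj X) ⊗ₘ g.app (T.obj Y))
          ≫ (T.μ.app X ⊗ₘ T.μ.app Y)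
          ≫ Smap T L R sl g (T.obj X ⊗ T.obj Y)
          ≫ Q.δ (T.obj X) (T.obj Y)
          ≫ (T.μ.app X ⊗ₘ T.μ.app Y) := by
        rw [reassoc_of% (hg.1 (T.obj X) (T.obj Y))]
    _ = (T.η.app X ⊗ₘ T.η.app Y)
          ≫ Smap T L R sl g (T.obj X ⊗ T.obj Y)
          ≫ Q.δ (T.obj X) (T.obj Y)
          ≫ (T.μ.app X ⊗ₘ T.μ.app Y) := by
        rw [← assoc, ← assoc, tensorHom_comp_tensorHom, tensorHom_comp_tensorHom]
        simp only [assoc]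
        rw [conv_g_Smap L R hsl hg X, conv_g_Smap L R hsl hg Y]
    _ = T.η.app (X ⊗ Y) ≫ Q.δ X Y
          ≫ Smap T L R sl g (T.obj X ⊗ T.obj Y)
          ≫ Q.δ (T.obj X) (T.obj Y)
          ≫ (T.μ.app X ⊗ₘ T.μ.app Y) := by
        rw [← reassoc_of% (hB.eta_δ X Y)]
    _ = T.η.app (X ⊗ Y) ≫ Smap T L R sl g (T.obj (X ⊗ Y))
          ≫ T.map (Q.δ X Y) ≫ Q.δ (T.obj X) (T.obj Y)
          ≫ (T.μ.app X ⊗ₘ T.μ.app Y) := by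
        rw [reassoc_of% (Smap_natural L R hsl g (Q.δ X Y))]
    _ = T.η.app (X ⊗ Y) ≫ Smap T L R sl g (T.obj (X ⊗ Y))
          ≫ T.μ.app (X ⊗ Y) ≫ Q.δ X Y := by
        rw [hB.mu_δ X Y]
    _ = Smap T L R sl g (X ⊗ Y) ≫ T.map (T.η.app (X ⊗ Y))
          ≫ T.μ.app (X ⊗ Y) ≫ Q.δ X Y := by
        rw [reassoc_of% (Smap_natural L R hsl g (T.η.app (X ⊗ Y)))]
    _ = Smap T L R sl g (X ⊗ Y) ≫ Q.δ X Y := by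
        simp

end Hopf4
/-- For a bimonad `T`, a natural transformation `g : 1_C ⟶ T` is
grouplike iff `g^♯` (with `g^♯_{(M,r)} = r ∘ g_M`) is a monoidal endomorphism of the
strict monoidal forgetful functor `U_T`.  Moreover, if `T` is a Hopf monad (with
antipodes `sl`, `sr`), the grouplike elements form a group under convolution, the
inverse of `g` being `S(g) = S⁻¹(g)`. -/
theorem stmt11 (T : Monad C) (Q : Comonoidal T.toFunctor) (hB : IsBimonad T Q)
    (L : LeftDualData C) (R : RightDualData C)
    (sl : ∀ X : C, T.obj (L.d (T.obj X)) ⟶ L.d X)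
    (sr : ∀ X : C, T.obj (R.d (T.obj X)) ⟶ R.d X)
    (hsl : IsLeftAntipode T Q L sl) (hsr : IsRightAntipode T Q R sr) :
    (∀ g : 𝟭 C ⟶ T.toFunctor,
      IsGrouplike T Q g ↔
        ((∀ M N : T.Algebra,
          g.app (M.A ⊗ N.A) ≫ Q.δ M.A N.A ≫ (M.a ⊗ₘ N.a)
            = (g.app M.A ≫ M.a) ⊗ₘ (g.app N.A ≫ N.a)) ∧
         g.app (𝟙_ C) ≫ Q.ε = 𝟙 (𝟙_ C))) ∧
    (∃ conv : (𝟭 C ⟶ T.toFunctor) → (𝟭 C ⟶ T.toFunctor) → (𝟭 C ⟶ T.toFunctor),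
      (∀ (φ ψ : 𝟭 C ⟶ T.toFunctor) (X : C),
        (conv φ ψ).app X = ψ.app X ≫ φ.app (T.obj X) ≫ T.μ.app X) ∧
      IsGrouplike T Q T.η ∧
      (∀ g g' : 𝟭 C ⟶ T.toFunctor,
        IsGrouplike T Q g → IsGrouplike T Q g' → IsGrouplike T Q (conv g g')) ∧
      (∀ g : 𝟭 C ⟶ T.toFunctor, IsGrouplike T Q g →
        ∃ h : 𝟭 C ⟶ T.toFunctor,
          (∀ X : C, h.app X = Smap T L R sl g X) ∧
          (∀ X : C, h.app X = SinvMap T L R sr g X) ∧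
          IsGrouplike T Q h ∧ conv g h = T.η ∧ conv h g = T.η)) := by
  constructor
  · intro g
    exact grouplike_iff T Q g
  · refine ⟨conv T, fun φ ψ X => rfl, grouplike_eta T Q hB,
      fun g g' hg hg' => grouplike_conv T Q hB hg hg', ?_⟩
    intro g hg
    refine ⟨{ app := fun X => Smap T L R sl g X,
              naturality := fun X Y f => by
                simpa using Smap_natural L R hsl g f },
      fun X => rfl, fun X => Smap_eq_SinvMap L R hsl hsr hg X,
      ⟨fun X Y => Smap_δ L R hB hsl hg X Y, Smap_counit L R hB hsl hg⟩, ?_, ?_⟩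
    · ext X
      exact conv_g_Smap L R hsl hg X
    · ext X
      exact conv_Smap_g L R hsl hg X


end HopfMonadPaper
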